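/- Let G⃗ be a rooted extraction order with a decomposable edge label assignment, let k be a node occurring as a label, and let i ≠ k be a node of the label-induced subgraph for k (i.e., some edge incident to i is labeled with k). Then every directed path in G⃗ from i to k consists entirely of edges labeled with k. -/

import Mathlib

/-- A directed path in the digraph `A` from `i` to `j`, given as its list of vertices. -/
def DiPath {V : Type*} (A : V → V → Prop) (i j : V) (l : List V) : Prop :=
  List.Chain' A l ∧ l.head? = some i ∧ l.getLast? = some j ∧ l.Nodup ∧ 2 ≤ l.length

/-- A confluence from `i` to `j`: a pair of distinct directed paths from `i` to `j`
that are node-disjoint except for their shared start and end nodes. -/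
def IsConfluence {V : Type*} (A : V → V → Prop) (i j : V) (l₁ l₂ : List V) : Prop :=
  DiPath A i j l₁ ∧ DiPath A i j l₂ ∧ l₁ ≠ l₂ ∧
  ∀ v ∈ l₁, v ∈ l₂ → v = i ∨ v = j

/-- The confluence edge label assignment: the edge `e` is labeled with `j` iff `e`
lies on some confluence ending in `j`. -/
def ConfLabel {V : Type*} (A : V → V → Prop) (e : V × V) (j : V) : Prop :=
  ∃ i l₁ l₂, IsConfluence A i j l₁ l₂ ∧ (e ∈ l₁.zip l₁.tail ∨ e ∈ l₂.zip l₂.tail)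

/-- The confluence label set of an edge. -/
def ConfSet {V : Type*} (A : V → V → Prop) (e : V × V) : Set V :=
  {j | ConfLabel A e j}

/-- The digraph `A` is acyclic. -/
def Acyclic {V : Type*} (A : V → V → Prop) : Prop :=
  ∀ v, ¬ Relation.TransGen A v v

/-- Every node of the digraph `A` is reachable from the root `r`. -/
def RootedAt {V : Type*} (A : V → V → Prop) (r : V) : Prop :=
  ∀ v, Relation.ReflTransGen A r v

/-- The nodes of the label-induced subgraph for the label `k`: endpoints of edges
labeled with `k`. -/
def LabelNodes {V : Type*} (A : V → V → Prop) (L : V × V → Set V) (k : V) : Set V :=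
  {v | ∃ w, (A v w ∧ k ∈ L (v, w)) ∨ (A w v ∧ k ∈ L (w, v))}

/-- A decomposable edge label assignment `L` for the digraph `A`:
it extends the confluence edge labels, every label-induced subgraph is connected and
rooted, every label node lies in its own label-induced subgraph, all in-edges of a
node carry the same label set, and no out-edge of `k` is labeled with `k`. -/
structure DecomposableLabels {V : Type*} (A : V → V → Prop) (L : V × V → Set V) :
    Prop where
  extends_confluence : ∀ (e : V × V) (j : V), ConfLabel A e j → j ∈ L e
  rooted_label_subgraph : ∀ k : V, (∃ v w, A v w ∧ k ∈ L (v, w)) →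
    ∃ ρ ∈ LabelNodes A L k, ∀ v ∈ LabelNodes A L k,
      Relation.ReflTransGen (fun x y => A x y ∧ k ∈ L (x, y)) ρ v
  mem_own_subgraph : ∀ k : V, (∃ v w, A v w ∧ k ∈ L (v, w)) → k ∈ LabelNodes A L k
  in_edges_eq : ∀ i k k' : V, A k i → A k' i → L (k, i) = L (k', i)
  not_self_labeled : ∀ k w : V, A k w → k ∉ L (k, w)

/-- Label path continuity: in a rooted extraction order with a decomposable edge
label assignment, if `i ≠ k` is a node of the label-induced subgraph for a label `k`,
then every directed path from `i` to `k` consists entirely of edges labeled with `k`. -/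
theorem stmt12 {V : Type*} (A : V → V → Prop) (r : V) (hac : Acyclic A)
    (hr : RootedAt A r) (L : V × V → Set V) (hL : DecomposableLabels A L) (k : V)
    (hk : ∃ v w, A v w ∧ k ∈ L (v, w)) (i : V) (hik : i ≠ k)
    (hi : i ∈ LabelNodes A L k) (l : List V) (hl : DiPath A i k l) :
    ∀ e ∈ l.zip l.tail, k ∈ L e := by
  obtain ⟨hchain, hhead, hlast, hnodup, hlen⟩ := hl
  obtain ⟨ρ, hρmem, hρ⟩ := hL.rooted_label_subgraph k hk
  obtain ⟨w₀, hw₀⟩ := hL.mem_own_subgraph k hk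
  rcases hw₀ with ⟨hA, hLk⟩ | ⟨hA0, hL0⟩
  · exact absurd hLk (hL.not_self_labeled k _ hA)
  have step3 : ∀ v w, A v w → (w = k ∨ (w ∈ LabelNodes A L k ∧ w ≠ ρ)) →
      k ∈ L (v, w) := by
    rintro v w hvw (rfl | ⟨hwmem, hwρ⟩)
    · rw [hL.in_edges_eq w v w₀ hvw hA0]; exact hL0
    · rcases (hρ w hwmem).cases_tail with rfl | ⟨u, _, hu, huL⟩
      · exact absurd rfl hwρ
      · rw [hL.in_edges_eq w v u hvw hu]; exact huL
  have htg : ∀ (t : List V) (a : V), List.Chain' A (a :: t) →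
      ∀ v ∈ t, Relation.TransGen A a v := by
    intro t
    induction t with
    | nil => intro a _ v hv; simp at hv
    | cons b rest ih =>
      intro a hc v hv
      simp only [List.Chain', List.isChain_cons_cons] at hc
      rcases List.mem_cons.mp hv with rfl | hv
      · exact Relation.TransGen.single hc.1
      · exact (ih b hc.2 v hv).head hc.1
  have main : ∀ (t : List V) (a : V), List.Chain' A (a :: t) →
      (a :: t).getLast? = some k → (∀ v ∈ t, v ≠ ρ) →
      ∀ e ∈ (a :: t).zip t, k ∈ L e := by
    intro t
    induction t with
    | nil => intro a _ _ _ e he; simp at he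
    | cons b rest ih =>
      intro a hc hlast hρt e he
      simp only [List.Chain', List.isChain_cons_cons] at hc
      have hlast' : (b :: rest).getLast? = some k := by
        rwa [List.getLast?_cons_cons] at hlast
      have hrest : ∀ e ∈ (b :: rest).zip rest, k ∈ L e :=
        ih b hc.2 hlast' (fun v hv => hρt v (List.mem_cons_of_mem b hv))
      rw [List.zip_cons_cons] at he
      rcases List.mem_cons.mp he with rfl | he2
      · cases rest with
        | nil =>
          have hbk : b = k := by simpa using hlast'
          exact step3 a b hc.1 (Or.inl hbk)
        | cons c rest' =>
          have hbc : k ∈ L (b, c) := hrest (b, c) (by simp [List.zip_cons_cons])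
          have hAbc : A b c := by
            have := hc.2; simp only [List.Chain', List.isChain_cons_cons] at this; exact this.1
          have hbmem : b ∈ LabelNodes A L k := ⟨c, Or.inl ⟨hAbc, hbc⟩⟩
          exact step3 a b hc.1 (Or.inr ⟨hbmem, hρt b (by simp)⟩)
      · exact hrest e he2
  cases l with
  | nil => simp at hhead
  | cons a t =>
    have ha : a = i := by simpa using hhead
    subst ha
    have hρt : ∀ v ∈ t, v ≠ ρ := by
      rintro v hv rfl
      have h1 : Relation.TransGen A a v := htg t a hchain v hv
      have h2 : Relation.ReflTransGen A v a :=
        Relation.ReflTransGen.mono (r := fun x y => A x y ∧ k ∈ L (x, y)) (p := A)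
          (fun x y h => h.1) v a (hρ a hi)
      exact hac a (h1.trans_left h2)
    exact main t a hchain hlast hρt
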